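/- For symmetric positive definite matrices A and I, and an invertible matrix J, setting A' = J⁻ᵀ A J⁻¹ and I' = J⁻ᵀ I J⁻¹, the matrix A'^{-1/2} I' A'^{-1/2} is similar to A^{-1/2} I A^{-1/2}, and hence has the same eigenvalues; in particular λ_min(A'^{-1/2} I' A'^{-1/2}) = λ_min(A^{-1/2} I A^{-1/2}). -/

import Mathlib

open Matrix Filter Asymptotics MeasureTheory
open scoped Topology

noncomputable def minEig {d : ℕ} (M : Matrix (Fin d) (Fin d) ℝ) : ℝ := sInf (spectrum ℝ M)

open Classical in
noncomputable def sqrtInv {d : ℕ} (A : Matrix (Fin d) (Fin d) ℝ) : Matrix (Fin d) (Fin d) ℝ :=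
  if h : A.PosSemidef then
    ((h.1.eigenvectorUnitary : Matrix (Fin d) (Fin d) ℝ) *
      diagonal ((↑) ∘ (√·) ∘ h.1.eigenvalues) *
      (star h.1.eigenvectorUnitary : Matrix (Fin d) (Fin d) ℝ))⁻¹ else 0

noncomputable def quadForm {d : ℕ} (M : Matrix (Fin d) (Fin d) ℝ) (v : EuclideanSpace ℝ (Fin d)) : ℝ :=
  (inner ℝ v (Matrix.toEuclideanLin M v) : ℝ)

lemma posDef_conj_aux {d : ℕ} {A B : Matrix (Fin d) (Fin d) ℝ} (hA : A.PosDef) (hB : IsUnit B) :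
    (Bᵀ * A * B).PosDef := by
  rw [← Matrix.conjTranspose_eq_transpose_of_trivial]
  exact hA.conjTranspose_mul_mul_same (Matrix.mulVec_injective_iff_isUnit.mpr hB)

noncomputable def sqrtAux {d : ℕ} {A : Matrix (Fin d) (Fin d) ℝ} (h : A.PosSemidef) :
    Matrix (Fin d) (Fin d) ℝ :=
  (h.1.eigenvectorUnitary : Matrix (Fin d) (Fin d) ℝ) *
      diagonal ((↑) ∘ (√·) ∘ h.1.eigenvalues) *
      (star h.1.eigenvectorUnitary : Matrix (Fin d) (Fin d) ℝ)

lemma sqrtAux_mul_self {d : ℕ} {A : Matrix (Fin d) (Fin d) ℝ} (h : A.PosSemidef) :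
    sqrtAux h * sqrtAux h = A := by
  have hA' := h.1.spectral_theorem
  rw [Unitary.conjStarAlgAut_apply] at hA'
  conv_rhs => rw [hA']
  unfold sqrtAux
  have hu : (star h.1.eigenvectorUnitary : Matrix (Fin d) (Fin d) ℝ) *
      (h.1.eigenvectorUnitary : Matrix (Fin d) (Fin d) ℝ) = 1 := Unitary.coe_star_mul_self _
  calc _ = (h.1.eigenvectorUnitary : Matrix (Fin d) (Fin d) ℝ) *
      diagonal ((↑) ∘ (√·) ∘ h.1.eigenvalues) *
      ((star h.1.eigenvectorUnitary : Matrix (Fin d) (Fin d) ℝ) *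
        (h.1.eigenvectorUnitary : Matrix (Fin d) (Fin d) ℝ)) *
      diagonal ((↑) ∘ (√·) ∘ h.1.eigenvalues) *
      (star h.1.eigenvectorUnitary : Matrix (Fin d) (Fin d) ℝ) := by
        simp only [Matrix.mul_assoc]
    _ = _ := by
      rw [hu, Matrix.mul_one, Matrix.mul_assoc _ (diagonal _) (diagonal _), diagonal_mul_diagonal]
      congr 3
      funext i
      simp [Real.mul_self_sqrt (h.eigenvalues_nonneg i)]

lemma sqrt_isUnit_aux {d : ℕ} {A : Matrix (Fin d) (Fin d) ℝ} (hA : A.PosDef) :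
    IsUnit (sqrtAux hA.posSemidef) := by
  have h : sqrtAux hA.posSemidef * sqrtAux hA.posSemidef = A := sqrtAux_mul_self hA.posSemidef
  have hdet : IsUnit ((sqrtAux hA.posSemidef).det * (sqrtAux hA.posSemidef).det) := by
    rw [← Matrix.det_mul, h]; exact hA.det_pos.ne'.isUnit
  exact (Matrix.isUnit_iff_isUnit_det _).2 (isUnit_of_mul_isUnit_left hdet)

lemma sqrtInv_eq_aux {d : ℕ} {A : Matrix (Fin d) (Fin d) ℝ} (hA : A.PosDef) :
    sqrtInv A = (sqrtAux hA.posSemidef)⁻¹ := dif_pos hA.posSemidef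

lemma sqrtInv_mul_sqrt_aux {d : ℕ} {A : Matrix (Fin d) (Fin d) ℝ} (hA : A.PosDef) :
    sqrtInv A * sqrtAux hA.posSemidef = 1 := by
  rw [sqrtInv_eq_aux hA]
  exact Matrix.nonsing_inv_mul _ ((Matrix.isUnit_iff_isUnit_det _).1 (sqrt_isUnit_aux hA))

lemma sqrt_mul_sqrtInv_aux {d : ℕ} {A : Matrix (Fin d) (Fin d) ℝ} (hA : A.PosDef) :
    sqrtAux hA.posSemidef * sqrtInv A = 1 := by
  rw [sqrtInv_eq_aux hA]
  exact Matrix.mul_nonsing_inv _ ((Matrix.isUnit_iff_isUnit_det _).1 (sqrt_isUnit_aux hA))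

lemma sqrtInv_mul_sqrtInv_aux {d : ℕ} {A : Matrix (Fin d) (Fin d) ℝ} (hA : A.PosDef) :
    sqrtInv A * sqrtInv A = A⁻¹ := by
  rw [sqrtInv_eq_aux hA, ← Matrix.mul_inv_rev, sqrtAux_mul_self hA.posSemidef]

/-- Tensorial transformation of A and I yields a similar matrix, with equal spectrum
and equal smallest eigenvalue. -/
theorem stmt_3 {d : ℕ} (A I J : Matrix (Fin d) (Fin d) ℝ) (hA : A.PosDef) (hI : I.PosDef)
    (hJ : IsUnit J) :
    (∃ P : Matrix (Fin d) (Fin d) ℝ, IsUnit P ∧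
        sqrtInv ((J⁻¹)ᵀ * A * J⁻¹) * ((J⁻¹)ᵀ * I * J⁻¹) * sqrtInv ((J⁻¹)ᵀ * A * J⁻¹) =
          P * (sqrtInv A * I * sqrtInv A) * P⁻¹) ∧
      spectrum ℝ (sqrtInv ((J⁻¹)ᵀ * A * J⁻¹) * ((J⁻¹)ᵀ * I * J⁻¹) * sqrtInv ((J⁻¹)ᵀ * A * J⁻¹)) =
        spectrum ℝ (sqrtInv A * I * sqrtInv A) ∧
      minEig (sqrtInv ((J⁻¹)ᵀ * A * J⁻¹) * ((J⁻¹)ᵀ * I * J⁻¹) * sqrtInv ((J⁻¹)ᵀ * A * J⁻¹)) =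
        minEig (sqrtInv A * I * sqrtInv A) := by
  have hdJ : IsUnit J.det := (Matrix.isUnit_iff_isUnit_det _).1 hJ
  have hJinv : IsUnit J⁻¹ := (Matrix.isUnit_nonsing_inv_iff).2 hJ
  have hA' : ((J⁻¹)ᵀ * A * J⁻¹).PosDef := posDef_conj_aux hA hJinv
  set R : Matrix (Fin d) (Fin d) ℝ := sqrtAux hA.posSemidef with hR
  set S : Matrix (Fin d) (Fin d) ℝ := sqrtInv A with hS
  set S' : Matrix (Fin d) (Fin d) ℝ := sqrtInv ((J⁻¹)ᵀ * A * J⁻¹) with hS'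
  set R' : Matrix (Fin d) (Fin d) ℝ := sqrtAux hA'.posSemidef with hR'
  have hRR : R * R = A := sqrtAux_mul_self hA.posSemidef
  have hSR : S * R = 1 := sqrtInv_mul_sqrt_aux hA
  have hRS : R * S = 1 := sqrt_mul_sqrtInv_aux hA
  have hSS : S * S = A⁻¹ := sqrtInv_mul_sqrtInv_aux hA
  have hRR' : R' * R' = (J⁻¹)ᵀ * A * J⁻¹ := sqrtAux_mul_self hA'.posSemidef
  have hS'R' : S' * R' = 1 := sqrtInv_mul_sqrt_aux hA'
  have hR'S' : R' * S' = 1 := sqrt_mul_sqrtInv_aux hA'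
  have hS'S' : S' * S' = ((J⁻¹)ᵀ * A * J⁻¹)⁻¹ := sqrtInv_mul_sqrtInv_aux hA'
  have hJJ : J * J⁻¹ = 1 := Matrix.mul_nonsing_inv _ hdJ
  have hJJ' : J⁻¹ * J = 1 := Matrix.nonsing_inv_mul _ hdJ
  have hJt : (J⁻¹)ᵀ * Jᵀ = 1 := by rw [← Matrix.transpose_mul, hJJ, Matrix.transpose_one]
  have hJt' : Jᵀ * (J⁻¹)ᵀ = 1 := by rw [← Matrix.transpose_mul, hJJ', Matrix.transpose_one]
  have hAA : A * A⁻¹ = 1 := Matrix.mul_nonsing_inv _ ((Matrix.isUnit_iff_isUnit_det _).1 hA.isUnit)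
  -- ∀-quantified rewrite helpers (right-assoc form)
  have hRSl : ∀ X : Matrix (Fin d) (Fin d) ℝ, R * (S * X) = X := fun X => by
    rw [← Matrix.mul_assoc, hRS, Matrix.one_mul]
  have hSRl : ∀ X : Matrix (Fin d) (Fin d) ℝ, S * (R * X) = X := fun X => by
    rw [← Matrix.mul_assoc, hSR, Matrix.one_mul]
  have hSSl : ∀ X : Matrix (Fin d) (Fin d) ℝ, S * (S * X) = A⁻¹ * X := fun X => by
    rw [← Matrix.mul_assoc, hSS]
  have hRRl : ∀ X : Matrix (Fin d) (Fin d) ℝ, R * (R * X) = A * X := fun X => by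
    rw [← Matrix.mul_assoc, hRR]
  have hR'S'l : ∀ X : Matrix (Fin d) (Fin d) ℝ, R' * (S' * X) = X := fun X => by
    rw [← Matrix.mul_assoc, hR'S', Matrix.one_mul]
  have hJl : ∀ X : Matrix (Fin d) (Fin d) ℝ, J⁻¹ * (J * X) = X := fun X => by
    rw [← Matrix.mul_assoc, hJJ', Matrix.one_mul]
  have hJtl : ∀ X : Matrix (Fin d) (Fin d) ℝ, (J⁻¹)ᵀ * (Jᵀ * X) = X := fun X => by
    rw [← Matrix.mul_assoc, hJt, Matrix.one_mul]
  have hJt'l : ∀ X : Matrix (Fin d) (Fin d) ℝ, Jᵀ * ((J⁻¹)ᵀ * X) = X := fun X => by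
    rw [← Matrix.mul_assoc, hJt', Matrix.one_mul]
  have hAl : ∀ X : Matrix (Fin d) (Fin d) ℝ, A * (A⁻¹ * X) = X := fun X => by
    rw [← Matrix.mul_assoc, hAA, Matrix.one_mul]
  have hinv' : ((J⁻¹)ᵀ * A * J⁻¹)⁻¹ = J * A⁻¹ * Jᵀ := by
    apply Matrix.inv_eq_right_inv
    simp only [Matrix.mul_assoc, hJl, hAl]
    exact hJt
  have hS'S'2 : S' * S' = J * A⁻¹ * Jᵀ := hS'S'.trans hinv'
  have hC : J⁻¹ * S' = A⁻¹ * (Jᵀ * R') := by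
    have h1 : J⁻¹ * S' = J⁻¹ * (S' * (S' * R')) := by rw [hS'R', mul_one]
    rw [h1, show J⁻¹ * (S' * (S' * R')) = J⁻¹ * ((S' * S') * R') by
      simp only [Matrix.mul_assoc], hS'S'2]
    simp only [Matrix.mul_assoc, hJl]
  set P : Matrix (Fin d) (Fin d) ℝ := S' * (J⁻¹)ᵀ * R with hP
  set Q : Matrix (Fin d) (Fin d) ℝ := S * Jᵀ * R' with hQ
  have hPQ : P * Q = 1 := by
    show S' * (J⁻¹)ᵀ * R * (S * Jᵀ * R') = 1
    simp only [Matrix.mul_assoc, hRSl, hJtl]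
    exact hS'R'
  have hQP : Q * P = 1 := by
    show S * Jᵀ * R' * (S' * (J⁻¹)ᵀ * R) = 1
    simp only [Matrix.mul_assoc, hR'S'l, hJt'l]
    exact hSR
  have hPunit : IsUnit P := ⟨⟨P, Q, hPQ, hQP⟩, rfl⟩
  have hPinv : P⁻¹ = Q := Matrix.inv_eq_right_inv hPQ
  have hkey : S' * ((J⁻¹)ᵀ * I * J⁻¹) * S' = P * (S * I * S) * P⁻¹ := by
    rw [hPinv]
    show S' * ((J⁻¹)ᵀ * I * J⁻¹) * S' = S' * (J⁻¹)ᵀ * R * (S * I * S) * (S * Jᵀ * R')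
    simp only [Matrix.mul_assoc, hRSl, hSSl]
    rw [hC]
  have hspec : spectrum ℝ (S' * ((J⁻¹)ᵀ * I * J⁻¹) * S') = spectrum ℝ (S * I * S) := by
    rw [hkey, hPinv]
    exact spectrum.units_conjugate (u := ⟨P, Q, hPQ, hQP⟩)
  exact ⟨⟨P, hPunit, hkey⟩, hspec, by unfold minEig; rw [hspec]⟩
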